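/- For all s ∈ ℝ and t > 0, L̂_d applied to the function (s,t) ↦ (d(t)−s)·ψ̂₀(s,t) equals 2ε ∂ψ̂₀/∂s(s,t) = 2√(ε/(πt)) Ê(s,t). -/

import Mathlib

/-- The complementary error function `erfc z = (2/√π) ∫_z^∞ e^{-u²} du`. -/
noncomputable def erfc (z : ℝ) : ℝ :=
  (2 / Real.sqrt Real.pi) * ∫ u in Set.Ioi z, Real.exp (-u ^ 2)

/-- `ψ̂₀(s,t) = erfc((d(t)-s)/(2√(εt)))`. -/
noncomputable def psi0 (ε : ℝ) (d : ℝ → ℝ) (s t : ℝ) : ℝ :=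
  erfc ((d t - s) / (2 * Real.sqrt (ε * t)))

/-- `Ê(s,t) = exp(-(s-d(t))²/(4εt))`. -/
noncomputable def Ehat (ε : ℝ) (d : ℝ → ℝ) (s t : ℝ) : ℝ :=
  Real.exp (-(s - d t) ^ 2 / (4 * ε * t))

/-- The operator `L̂_d F = -ε F_ss + â(d(t),t) F_s + F_t`. -/
noncomputable def Ld (ε : ℝ) (a : ℝ → ℝ → ℝ) (d : ℝ → ℝ) (F : ℝ → ℝ → ℝ) (s t : ℝ) : ℝ :=
  -ε * iteratedDeriv 2 (fun x => F x t) s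
    + a (d t) t * deriv (fun x => F x t) s
    + deriv (fun τ => F s τ) t

lemma gauss_integrable : MeasureTheory.Integrable (fun u : ℝ => Real.exp (-u ^ 2)) := by
  have := integrable_exp_neg_mul_sq (b := 1) one_pos
  simpa using this

lemma erfc_hasDerivAt (z : ℝ) :
    HasDerivAt erfc (-(2 / Real.sqrt Real.pi) * Real.exp (-z ^ 2)) z := by
  have hint := gauss_integrable
  have hrep : ∀ x : ℝ, erfc x
      = (2 / Real.sqrt Real.pi) *
        ((∫ u : ℝ, Real.exp (-u ^ 2)) - (∫ u in Set.Iic (0:ℝ), Real.exp (-u ^ 2))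
          - ∫ u in (0:ℝ)..x, Real.exp (-u ^ 2)) := by
    intro x
    have h1 : (∫ u in Set.Iic x, Real.exp (-u ^ 2)) - (∫ u in Set.Iic (0:ℝ), Real.exp (-u ^ 2))
        = ∫ u in (0:ℝ)..x, Real.exp (-u ^ 2) :=
      intervalIntegral.integral_Iic_sub_Iic hint.integrableOn hint.integrableOn
    have h2 : (∫ u in Set.Iic x, Real.exp (-u ^ 2)) + (∫ u in Set.Ioi x, Real.exp (-u ^ 2))
        = ∫ u : ℝ, Real.exp (-u ^ 2) :=
      intervalIntegral.integral_Iic_add_Ioi hint.integrableOn hint.integrableOn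
    unfold erfc
    congr 1
    linarith [h1, h2]
  have hD : HasDerivAt (fun x => ∫ u in (0:ℝ)..x, Real.exp (-u ^ 2)) (Real.exp (-z ^ 2)) z := by
    apply intervalIntegral.integral_hasDerivAt_right hint.intervalIntegrable
    · exact hint.aestronglyMeasurable.stronglyMeasurableAtFilter
    · exact Continuous.continuousAt (by continuity)
  have : HasDerivAt (fun x => (2 / Real.sqrt Real.pi) *
        ((∫ u : ℝ, Real.exp (-u ^ 2)) - (∫ u in Set.Iic (0:ℝ), Real.exp (-u ^ 2))
          - ∫ u in (0:ℝ)..x, Real.exp (-u ^ 2)))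
      (-(2 / Real.sqrt Real.pi) * Real.exp (-z ^ 2)) z := by
    have := ((hasDerivAt_const z ((∫ u : ℝ, Real.exp (-u ^ 2))
        - (∫ u in Set.Iic (0:ℝ), Real.exp (-u ^ 2)))).sub hD).const_mul (2 / Real.sqrt Real.pi)
    refine this.congr_deriv ?_; ring
  exact this.congr_of_eventuallyEq (Filter.Eventually.of_forall fun x => hrep x)

/-- `Ld` applied to `(s,t) ↦ (d t - s) * psi0 s t` equals
`2ε ∂psi0/∂s`, which equals `2 sqrt(ε/(πt)) Ehat`. -/
theorem stmt_2
    (ε d₀ : ℝ) (hε : 0 < ε) (hd₀ : d₀ ∈ Set.Ioo (0 : ℝ) 1)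
    (a : ℝ → ℝ → ℝ) (haC1 : ContDiff ℝ 1 (fun p : ℝ × ℝ => a p.1 p.2))
    (hapos : ∀ s t : ℝ, 0 ≤ t → 0 < a s t)
    (d : ℝ → ℝ) (hdC1 : ContDiff ℝ 1 d)
    (hdODE : ∀ t : ℝ, 0 ≤ t → HasDerivAt d (a (d t) t) t)
    (hd0 : d 0 = d₀) :
    ∀ s t : ℝ, 0 < t →
      Ld ε a d (fun s' t' => (d t' - s') * psi0 ε d s' t') s t
        = 2 * ε * deriv (fun x => psi0 ε d x t) s ∧
      2 * ε * deriv (fun x => psi0 ε d x t) s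
        = 2 * Real.sqrt (ε / (Real.pi * t)) * Ehat ε d s t := by
  intro s t ht
  have hεt : 0 < ε * t := mul_pos hε ht
  have hr : 0 < Real.sqrt (ε * t) := Real.sqrt_pos.2 hεt
  have hrne : Real.sqrt (ε * t) ≠ 0 := hr.ne'
  have hπ : 0 < Real.sqrt Real.pi := Real.sqrt_pos.2 Real.pi_pos
  -- space derivative of psi0
  have hps : ∀ x : ℝ, HasDerivAt (fun y => erfc ((d t - y) / (2 * Real.sqrt (ε * t))))
      ((2 / Real.sqrt Real.pi) / (2 * Real.sqrt (ε * t))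
        * Real.exp (-((d t - x) / (2 * Real.sqrt (ε * t))) ^ 2)) x := by
    intro x
    have hinner : HasDerivAt (fun y => (d t - y) / (2 * Real.sqrt (ε * t)))
        (-1 / (2 * Real.sqrt (ε * t))) x := by
      simpa using ((hasDerivAt_id x).const_sub (d t)).div_const (2 * Real.sqrt (ε * t))
    have := (erfc_hasDerivAt ((d t - x) / (2 * Real.sqrt (ε * t)))).comp x hinner
    refine this.congr_deriv ?_
    field_simp
  -- second space derivative of psi0 (of the explicit first derivative)
  have hps2 : ∀ x : ℝ, HasDerivAt
      (fun y => (2 / Real.sqrt Real.pi) / (2 * Real.sqrt (ε * t))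
        * Real.exp (-((d t - y) / (2 * Real.sqrt (ε * t))) ^ 2))
      ((2 / Real.sqrt Real.pi) / (2 * Real.sqrt (ε * t))
        * Real.exp (-((d t - x) / (2 * Real.sqrt (ε * t))) ^ 2)
        * (2 * (d t - x) / (2 * Real.sqrt (ε * t)) ^ 2)) x := by
    intro x
    have hinner : HasDerivAt (fun y => (d t - y) / (2 * Real.sqrt (ε * t)))
        (-1 / (2 * Real.sqrt (ε * t))) x := by
      simpa using ((hasDerivAt_id x).const_sub (d t)).div_const (2 * Real.sqrt (ε * t))
    have hsq : HasDerivAt (fun y => -((d t - y) / (2 * Real.sqrt (ε * t))) ^ 2)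
        (2 * (d t - x) / (2 * Real.sqrt (ε * t)) ^ 2) x := by
      have := (hinner.pow 2).neg
      refine this.congr_deriv ?_
      push_cast
      field_simp
    have := (hsq.exp).const_mul ((2 / Real.sqrt Real.pi) / (2 * Real.sqrt (ε * t)))
    refine this.congr_deriv ?_
    ring
  -- derivative of (d t - x) * psi0
  have hD1 : ∀ x : ℝ, HasDerivAt (fun y => (d t - y) * erfc ((d t - y) / (2 * Real.sqrt (ε * t))))
      (-erfc ((d t - x) / (2 * Real.sqrt (ε * t)))
        + (d t - x) * ((2 / Real.sqrt Real.pi) / (2 * Real.sqrt (ε * t))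
          * Real.exp (-((d t - x) / (2 * Real.sqrt (ε * t))) ^ 2))) x := by
    intro x
    have hlin : HasDerivAt (fun y => d t - y) (-1) x := by
      simpa using (hasDerivAt_id x).const_sub (d t)
    have := hlin.mul (hps x)
    refine this.congr_deriv ?_
    ring
  have hderivFs : deriv (fun y => (d t - y) * erfc ((d t - y) / (2 * Real.sqrt (ε * t))))
      = fun x => -erfc ((d t - x) / (2 * Real.sqrt (ε * t)))
        + (d t - x) * ((2 / Real.sqrt Real.pi) / (2 * Real.sqrt (ε * t))
          * Real.exp (-((d t - x) / (2 * Real.sqrt (ε * t))) ^ 2)) :=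
    funext fun x => (hD1 x).deriv
  -- second derivative of (d t - x) * psi0
  have hD2 : HasDerivAt (fun x => -erfc ((d t - x) / (2 * Real.sqrt (ε * t)))
        + (d t - x) * ((2 / Real.sqrt Real.pi) / (2 * Real.sqrt (ε * t))
          * Real.exp (-((d t - x) / (2 * Real.sqrt (ε * t))) ^ 2)))
      (-((2 / Real.sqrt Real.pi) / (2 * Real.sqrt (ε * t))
          * Real.exp (-((d t - s) / (2 * Real.sqrt (ε * t))) ^ 2))
        + ((-1) * ((2 / Real.sqrt Real.pi) / (2 * Real.sqrt (ε * t))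
            * Real.exp (-((d t - s) / (2 * Real.sqrt (ε * t))) ^ 2))
          + (d t - s) * ((2 / Real.sqrt Real.pi) / (2 * Real.sqrt (ε * t))
            * Real.exp (-((d t - s) / (2 * Real.sqrt (ε * t))) ^ 2)
            * (2 * (d t - s) / (2 * Real.sqrt (ε * t)) ^ 2)))) s := by
    have hlin : HasDerivAt (fun y => d t - y) (-1) s := by
      simpa using (hasDerivAt_id s).const_sub (d t)
    exact ((hps s).neg).add (hlin.mul (hps2 s))
  have hiter : iteratedDeriv 2 (fun x => (d t - x) * erfc ((d t - x) / (2 * Real.sqrt (ε * t)))) s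
      = (-((2 / Real.sqrt Real.pi) / (2 * Real.sqrt (ε * t))
          * Real.exp (-((d t - s) / (2 * Real.sqrt (ε * t))) ^ 2))
        + ((-1) * ((2 / Real.sqrt Real.pi) / (2 * Real.sqrt (ε * t))
            * Real.exp (-((d t - s) / (2 * Real.sqrt (ε * t))) ^ 2))
          + (d t - s) * ((2 / Real.sqrt Real.pi) / (2 * Real.sqrt (ε * t))
            * Real.exp (-((d t - s) / (2 * Real.sqrt (ε * t))) ^ 2)
            * (2 * (d t - s) / (2 * Real.sqrt (ε * t)) ^ 2)))) := by
    rw [iteratedDeriv_succ, iteratedDeriv_one, hderivFs]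
    exact hD2.deriv
  -- time derivative
  have hdnum : HasDerivAt (fun τ => d τ - s) (a (d t) t) t := (hdODE t ht.le).sub_const s
  have hsqrt : HasDerivAt (fun τ => Real.sqrt (ε * τ)) (ε / (2 * Real.sqrt (ε * t))) t := by
    have h1 : HasDerivAt (fun τ => ε * τ) ε t := by simpa using (hasDerivAt_id t).const_mul ε
    have h2 := (Real.hasDerivAt_sqrt (ne_of_gt hεt)).comp t h1
    refine h2.congr_deriv ?_
    ring
  have hden : HasDerivAt (fun τ => 2 * Real.sqrt (ε * τ)) (ε / Real.sqrt (ε * t)) t := by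
    have := hsqrt.const_mul 2
    refine this.congr_deriv ?_
    field_simp
  have hfrac : HasDerivAt (fun τ => (d τ - s) / (2 * Real.sqrt (ε * τ)))
      ((a (d t) t * (2 * Real.sqrt (ε * t)) - (d t - s) * (ε / Real.sqrt (ε * t)))
        / (2 * Real.sqrt (ε * t)) ^ 2) t :=
    hdnum.div hden (by positivity)
  have hG : HasDerivAt (fun τ => (d τ - s) * erfc ((d τ - s) / (2 * Real.sqrt (ε * τ))))
      (a (d t) t * erfc ((d t - s) / (2 * Real.sqrt (ε * t)))
        + (d t - s) * (-(2 / Real.sqrt Real.pi)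
            * Real.exp (-((d t - s) / (2 * Real.sqrt (ε * t))) ^ 2)
          * ((a (d t) t * (2 * Real.sqrt (ε * t)) - (d t - s) * (ε / Real.sqrt (ε * t)))
              / (2 * Real.sqrt (ε * t)) ^ 2))) t :=
    hdnum.mul (HasDerivAt.comp (h₂ := erfc) t (erfc_hasDerivAt ((d t - s) / (2 * Real.sqrt (ε * t)))) hfrac)
  constructor
  · simp only [Ld, psi0]
    rw [hiter, (hD1 s).deriv, hG.deriv, (hps s).deriv]
    field_simp
    ring
  · simp only [psi0, Ehat]
    rw [(hps s).deriv]
    have hE : Real.exp (-((d t - s) / (2 * Real.sqrt (ε * t))) ^ 2)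
        = Real.exp (-(s - d t) ^ 2 / (4 * ε * t)) := by
      congr 1
      rw [div_pow, mul_pow, Real.sq_sqrt hεt.le]
      have h1 : (d t - s) ^ 2 = (s - d t) ^ 2 := by ring
      rw [h1]
      ring_nf
    rw [hE]
    have h1 : Real.sqrt (ε / (Real.pi * t))
        = Real.sqrt ε / (Real.sqrt Real.pi * Real.sqrt t) := by
      rw [Real.sqrt_div hε.le, Real.sqrt_mul Real.pi_pos.le]
    have h2 : Real.sqrt (ε * t) = Real.sqrt ε * Real.sqrt t := Real.sqrt_mul hε.le t
    have hee : Real.sqrt ε * Real.sqrt ε = ε := Real.mul_self_sqrt hε.le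
    have hsε : Real.sqrt ε ≠ 0 := (Real.sqrt_pos.2 hε).ne'
    have hst : Real.sqrt t ≠ 0 := (Real.sqrt_pos.2 ht).ne'
    rw [h1, h2]
    field_simp
    ring_nf
    rw [Real.sq_sqrt hε.le]
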